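/- For every integer J ≥ 2, the function f(z) = J(1−z)z^J/(1−z^J) is strictly convex on the open interval (0,1). -/

import Mathlib

open Set Finset

/-- Explicit formula for the first derivative of `f`. -/
noncomputable def futF1 (J : ℕ) : ℝ → ℝ := fun x =>
  (((J : ℝ) * -1 * x ^ J + (J : ℝ) * (1 - x) * ((J : ℝ) * x ^ (J - 1))) * (1 - x ^ J) -
      (J : ℝ) * (1 - x) * x ^ J * -((J : ℝ) * x ^ (J - 1))) / (1 - x ^ J) ^ 2

/-- Explicit formula for the second derivative of `f`. -/
noncomputable def futF2 (J : ℕ) : ℝ → ℝ := fun x =>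
  (J : ℝ) ^ 2 * x ^ (J - 2) *
      (((J : ℝ) - 1) * (1 - x) * (1 - x ^ J) + 2 * (J : ℝ) * x ^ J * (1 - x)
        - 2 * x * (1 - x ^ J)) / (1 - x ^ J) ^ 3

lemma futurity_gpos (J : ℕ) (hJ : 2 ≤ J) {x : ℝ} (hx : x ∈ Set.Ioo (0 : ℝ) 1) :
    0 < 1 - x ^ J :=
  sub_pos.mpr (pow_lt_one₀ hx.1.le hx.2 (by omega))

lemma futurity_hasDeriv1 (J : ℕ) (hJ : 2 ≤ J) {x : ℝ} (hx : x ∈ Set.Ioo (0 : ℝ) 1) :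
    HasDerivAt (fun z : ℝ => (J : ℝ) * (1 - z) * z ^ J / (1 - z ^ J)) (futF1 J x) x := by
  have hne : (1 : ℝ) - x ^ J ≠ 0 := (futurity_gpos J hJ hx).ne'
  have hc : HasDerivAt (fun z : ℝ => (J : ℝ) * (1 - z)) ((J : ℝ) * -1) x :=
    ((hasDerivAt_id' x).const_sub 1).const_mul (J : ℝ)
  have hn := hc.mul (hasDerivAt_pow J x)
  have hg : HasDerivAt (fun z : ℝ => 1 - z ^ J) (-((J : ℝ) * x ^ (J - 1))) x :=
    (hasDerivAt_pow J x).const_sub 1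
  exact hn.div hg hne

lemma futurity_deriv2 (J : ℕ) (hJ : 2 ≤ J) {x : ℝ} (hx : x ∈ Set.Ioo (0 : ℝ) 1) :
    deriv (futF1 J) x = futF2 J x := by
  have hne : (1 : ℝ) - x ^ J ≠ 0 := (futurity_gpos J hJ hx).ne'
  have hc : HasDerivAt (fun z : ℝ => (J : ℝ) * (1 - z)) ((J : ℝ) * -1) x :=
    ((hasDerivAt_id' x).const_sub 1).const_mul (J : ℝ)
  have hp1 := hasDerivAt_pow (J - 1) x
  have hA : HasDerivAt (fun z : ℝ => (J : ℝ) * -1 * z ^ J)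
      ((J : ℝ) * -1 * ((J : ℝ) * x ^ (J - 1))) x :=
    (hasDerivAt_pow J x).const_mul ((J : ℝ) * -1)
  have hB := hc.mul (hp1.const_mul (J : ℝ))
  have hN1 := (hA.add hB)
  have hg : HasDerivAt (fun z : ℝ => 1 - z ^ J) (-((J : ℝ) * x ^ (J - 1))) x :=
    (hasDerivAt_pow J x).const_sub 1
  have hn0 := hc.mul (hasDerivAt_pow J x)
  have hgneg := (hp1.const_mul (J : ℝ)).neg
  have hNum := (hN1.mul hg).sub (hn0.mul hgneg)
  have hden := hg.pow 2
  have total := hNum.div hden (pow_ne_zero 2 hne)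
  have hfr : futF1 J = (fun x : ℝ =>
      (((J : ℝ) * -1 * x ^ J + (J : ℝ) * (1 - x) * ((J : ℝ) * x ^ (J - 1))) * (1 - x ^ J) -
        (J : ℝ) * (1 - x) * x ^ J * -((J : ℝ) * x ^ (J - 1))) / (1 - x ^ J) ^ 2) := rfl
  rw [hfr]
  erw [total.deriv]
  simp only [Pi.add_apply, Pi.mul_apply, Pi.sub_apply, Pi.neg_apply, Pi.pow_apply]
  simp only [futF2]
  have e0 : x ^ (J - 1 - 1) = x ^ (J - 2) := rfl
  have e1 : x ^ (J - 1) = x ^ (J - 2) * x := by rw [← pow_succ]; congr 1; omega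
  have e2 : x ^ J = x ^ (J - 2) * x ^ 2 := by rw [← pow_add]; congr 1; omega
  have ec : ((J - 1 : ℕ) : ℝ) = (J : ℝ) - 1 := by
    rw [Nat.cast_sub (by omega : 1 ≤ J), Nat.cast_one]
  rw [e2] at hne
  rw [e0, e1, e2, ec]
  field_simp
  ring

lemma futurity_f2_pos (J : ℕ) (hJ : 2 ≤ J) {x : ℝ} (hx : x ∈ Set.Ioo (0 : ℝ) 1) :
    0 < futF2 J x := by
  obtain ⟨hx0, hx1⟩ := hx
  have hgpos : 0 < 1 - x ^ J := futurity_gpos J hJ ⟨hx0, hx1⟩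
  -- the geometric sum
  set T : ℝ := ∑ i ∈ Finset.range J, x ^ i with hTdef
  have hT : (1 - x) * T = 1 - x ^ J := by
    have h := geom_sum_mul x J
    linear_combination -h
  set S : ℝ := ∑ k ∈ Finset.Ico 1 J, x ^ k with hSdef
  have hS : T = 1 + S := by
    rw [hTdef, Finset.range_eq_Ico,
      Finset.sum_eq_sum_Ico_succ_bot (by omega : 0 < J)]
    simp
    rfl
  set G : ℝ := ∑ k ∈ Finset.Ico 1 J, (1 - x ^ k) * (1 - x ^ (J - k)) with hGdef
  have hrefl : ∑ k ∈ Finset.Ico 1 J, x ^ (J - k) = S := by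
    rw [hSdef, Finset.sum_Ico_eq_sum_range, Finset.sum_Ico_eq_sum_range,
      ← Finset.sum_range_reflect (fun k => x ^ (1 + k)) (J - 1)]
    refine Finset.sum_congr rfl fun k hk => ?_
    have hk' : k < J - 1 := Finset.mem_range.mp hk
    congr 1
    omega
  have hGexp : G = ((J : ℝ) - 1) * (1 + x ^ J) - 2 * S := by
    have expand : ∀ k ∈ Finset.Ico 1 J,
        (1 - x ^ k) * (1 - x ^ (J - k)) = (1 + x ^ J) - x ^ k - x ^ (J - k) := by
      intro k hk
      have hk' : 1 ≤ k ∧ k < J := Finset.mem_Ico.mp hk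
      have hpow : x ^ k * x ^ (J - k) = x ^ J := by
        rw [← pow_add]; congr 1; omega
      linear_combination hpow
    rw [hGdef, Finset.sum_congr rfl expand]
    rw [Finset.sum_sub_distrib, Finset.sum_sub_distrib, Finset.sum_const, hrefl, hSdef,
      Nat.card_Ico]
    have ec : ((J - 1 : ℕ) : ℝ) = (J : ℝ) - 1 := by
      rw [Nat.cast_sub (by omega : 1 ≤ J), Nat.cast_one]
    rw [nsmul_eq_mul, ec]
    ring
  have hGpos : 0 < G := by
    rw [hGdef]
    refine Finset.sum_pos (fun k hk => ?_) (Finset.nonempty_Ico.mpr (by omega))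
    have hk' : 1 ≤ k ∧ k < J := Finset.mem_Ico.mp hk
    have h1 : x ^ k < 1 := pow_lt_one₀ hx0.le hx1 (by omega)
    have h2 : x ^ (J - k) < 1 := pow_lt_one₀ hx0.le hx1 (by omega)
    exact mul_pos (by linarith) (by linarith)
  have hCG : ((J : ℝ) - 1) * (1 - x) * (1 - x ^ J) + 2 * (J : ℝ) * x ^ J * (1 - x)
      - 2 * x * (1 - x ^ J) = (1 - x) * G := by
    linear_combination (x - 1) * hGexp + 2 * hT + (2 * (x - 1)) * hS
  simp only [futF2]
  rw [hCG]
  have hJpos : (0 : ℝ) < (J : ℝ) := by positivity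
  apply div_pos
  · exact mul_pos (mul_pos (by positivity) (pow_pos hx0 _))
      (mul_pos (by linarith) hGpos)
  · positivity

/-- For every integer `J ≥ 2`, the function `f(z) = J(1-z)z^J/(1-z^J)` is strictly convex
on the open interval `(0,1)`. -/
theorem futurity_f_strictConvexOn (J : ℕ) (hJ : 2 ≤ J) :
    StrictConvexOn ℝ (Set.Ioo (0 : ℝ) 1)
      (fun z : ℝ => (J : ℝ) * (1 - z) * z ^ J / (1 - z ^ J)) := by
  refine strictConvexOn_of_deriv2_pos (convex_Ioo 0 1) ?_ ?_
  · exact fun y hy => (futurity_hasDeriv1 J hJ hy).continuousAt.continuousWithinAt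
  · rw [interior_Ioo]
    intro x hx
    have h1 : Set.EqOn (deriv fun z : ℝ => (J : ℝ) * (1 - z) * z ^ J / (1 - z ^ J))
        (futF1 J) (Set.Ioo (0 : ℝ) 1) := fun y hy => (futurity_hasDeriv1 J hJ hy).deriv
    have heq : (deriv fun z : ℝ => (J : ℝ) * (1 - z) * z ^ J / (1 - z ^ J))
        =ᶠ[nhds x] futF1 J := Filter.eventuallyEq_of_mem (isOpen_Ioo.mem_nhds hx) h1
    have h2 : deriv^[2] (fun z : ℝ => (J : ℝ) * (1 - z) * z ^ J / (1 - z ^ J)) x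
        = deriv (futF1 J) x := by
      show deriv (deriv fun z : ℝ => (J : ℝ) * (1 - z) * z ^ J / (1 - z ^ J)) x = _
      exact heq.deriv_eq
    rw [h2, futurity_deriv2 J hJ hx]
    exact futurity_f2_pos J hJ hx
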